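/- The map sending a pair of coprime integers (a,b) with a ≥ 1 and b ≥ 0 to the pair (ν, n), where n = a²+b² and ν is the unique integer with 0 ≤ ν < n and νa ≡ b (mod n), is a bijection from {(a,b) ∈ ℤ² : a ≥ 1, b ≥ 0, gcd(a,b) = 1} onto {(ν,n) ∈ ℤ² : n ≥ 1, 0 ≤ ν < n, n ∣ ν²+1}. (In particular, a is invertible modulo a²+b², and ν ≡ a⁻¹b (mod n) satisfies ν²+1 ≡ 0 (mod n).) -/

import Mathlib

open Zsqrtd

namespace Stmt1Aux

lemma exists_ab (ν n : ℤ) (hn : 1 ≤ n) (hdvd : n ∣ ν ^ 2 + 1) :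
    ∃ a b : ℤ, 1 ≤ a ∧ 0 ≤ b ∧ IsCoprime a b ∧ a ^ 2 + b ^ 2 = n ∧ n ∣ (b - ν * a) := by
  classical
  obtain ⟨m, hm⟩ := hdvd
  set v : GaussianInt := ⟨ν, -1⟩ with hv
  set dd : GaussianInt := EuclideanDomain.gcd (n : GaussianInt) v with hdd
  have h1 : dd ∣ (n : GaussianInt) := EuclideanDomain.gcd_dvd_left _ _
  have h2 : dd ∣ v := EuclideanDomain.gcd_dvd_right _ _
  have hvn : v.norm = ν ^ 2 + 1 := by simp [hv, Zsqrtd.norm_def]; ring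
  have hvv : v * star v = ((n : GaussianInt) * (m : GaussianInt)) := by
    rw [← Zsqrtd.norm_eq_mul_conj, hvn, hm]; push_cast; ring
  -- n ∣ norm dd
  have hbez : dd = (n : GaussianInt) * EuclideanDomain.gcdA (n : GaussianInt) v
      + v * EuclideanDomain.gcdB (n : GaussianInt) v := EuclideanDomain.gcd_eq_gcd_ab _ _
  set α := EuclideanDomain.gcdA (n : GaussianInt) v
  set β := EuclideanDomain.gcdB (n : GaussianInt) v
  have hndvd : (n : GaussianInt) ∣ (dd.norm : GaussianInt) := by
    rw [Zsqrtd.norm_eq_mul_conj, hbez]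
    refine ⟨(n : GaussianInt) * (α * star α) + α * star v * star β + v * star α * β
      + (m : GaussianInt) * (β * star β), ?_⟩
    rw [star_add, star_mul, star_mul, star_intCast]
    linear_combination (β * star β) * hvv
  have hn_dvd_N : n ∣ dd.norm := (Zsqrtd.intCast_dvd_intCast _ _).mp hndvd
  -- norm dd ∣ 2 n
  have hstar1 : star dd ∣ (n : GaussianInt) := by
    obtain ⟨c, hc⟩ := h1
    refine ⟨star c, ?_⟩
    rw [← star_intCast (R := GaussianInt) n, hc, star_mul, mul_comm]
  have hstar2 : star dd ∣ star v := by
    obtain ⟨c, hc⟩ := h2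
    exact ⟨star c, by rw [hc, star_mul, mul_comm]⟩
  set g := EuclideanDomain.gcd dd (star dd) with hg
  have hgdd : g ∣ dd := EuclideanDomain.gcd_dvd_left _ _
  have hgsd : g ∣ star dd := EuclideanDomain.gcd_dvd_right _ _
  have hg2 : g ∣ (2 : GaussianInt) := by
    have hgv : g ∣ v := hgdd.trans h2
    have hgsv : g ∣ star v := hgsd.trans hstar2
    have h02 : g ∣ (⟨0, 2⟩ : GaussianInt) := by
      have : (⟨0, 2⟩ : GaussianInt) = star v - v := by ext <;> simp [hv]
      rw [this]; exact hgsv.sub hgv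
    have : (2 : GaussianInt) = (⟨0, 2⟩ : GaussianInt) * ⟨0, -1⟩ := by
      ext <;> simp [Zsqrtd.re_mul, Zsqrtd.im_mul]
    exact this ▸ h02.mul_right _
  have hlcm : EuclideanDomain.lcm dd (star dd) ∣ (n : GaussianInt) :=
    EuclideanDomain.lcm_dvd h1 hstar1
  have hN2n : (dd.norm : GaussianInt) ∣ ((2 * n : ℤ) : GaussianInt) := by
    rw [Zsqrtd.norm_eq_mul_conj, ← EuclideanDomain.gcd_mul_lcm dd (star dd)]
    push_cast
    exact mul_dvd_mul hg2 hlcm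
  have hN2n' : dd.norm ∣ 2 * n := (Zsqrtd.intCast_dvd_intCast _ _).mp hN2n
  -- norm dd ∣ n * n and norm dd ∣ ν^2+1
  have hNnn : dd.norm ∣ n * n := by
    obtain ⟨c, hc⟩ := h1
    have := congrArg Zsqrtd.norm hc
    rw [Zsqrtd.norm_mul, Zsqrtd.norm_intCast] at this
    exact ⟨c.norm, this⟩
  have hNv : dd.norm ∣ ν ^ 2 + 1 := by
    obtain ⟨c, hc⟩ := h2
    have := congrArg Zsqrtd.norm hc
    rw [Zsqrtd.norm_mul] at this
    exact ⟨c.norm, by rw [← hvn, this]⟩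
  -- conclude norm dd = n
  have hNeq : dd.norm = n := by
    obtain ⟨k, hk⟩ := hn_dvd_N
    have hn0 : n ≠ 0 := by omega
    have hk2 : k ∣ 2 := by
      obtain ⟨t, ht⟩ := hN2n'
      refine ⟨t, ?_⟩
      have : n * (k * t) = n * 2 := by rw [← mul_assoc, ← hk]; linarith [ht]
      have := mul_left_cancel₀ hn0 this
      omega
    have hkpos : 0 < k := by
      have hNpos : 0 < dd.norm := by
        rcases lt_or_eq_of_le (Zsqrtd.norm_nonneg (by norm_num) dd) with h | h
        · exact h
        · exfalso; rw [← h] at hNv; norm_num at hNv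
          nlinarith [sq_nonneg ν, hNv]
      nlinarith
    have hk12 : k = 1 ∨ k = 2 := by
      have := Int.le_of_dvd (by norm_num) hk2
      omega
    rcases hk12 with rfl | rfl
    · omega
    · exfalso
      -- norm dd = 2n; 2n ∣ n*n gives 2 ∣ n; 2n ∣ ν²+1 gives contradiction mod 4
      rw [hk] at hNnn hNv
      obtain ⟨q, hq⟩ := hNnn
      have h2n : n = 2 * q := by
        have : n * n = n * (2 * q) := by linarith [hq]
        exact mul_left_cancel₀ hn0 this
      obtain ⟨t, ht⟩ := hNv
      rcases Int.even_or_odd ν with ⟨c, hc⟩ | ⟨c, hc⟩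
      · have hcc : ν ^ 2 = 4 * (c * c) := by rw [hc]; ring
        have h4 : (1 : ℤ) = 4 * (q * t - c * c) := by linear_combination ht - hcc + (2 * t) * h2n
        have : (4 : ℤ) ∣ 1 := ⟨_, h4⟩
        norm_num at this
      · have hcc : ν ^ 2 = 4 * (c * c) + 4 * c + 1 := by rw [hc]; ring
        have h4 : (2 : ℤ) = 4 * (q * t - c * c - c) := by linear_combination ht - hcc + (2 * t) * h2n
        have : (4 : ℤ) ∣ 2 := ⟨_, h4⟩
        norm_num at this
  -- extract a₀, b₀
  set a₀ := dd.re with ha₀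
  set b₀ := dd.im with hb₀
  have hsum : a₀ * a₀ + b₀ * b₀ = n := by
    have := Zsqrtd.norm_def dd
    rw [hNeq] at this
    linarith [this]
  -- congruences
  have hnd : (n : GaussianInt) = dd * star dd := by
    rw [← Zsqrtd.norm_eq_mul_conj, hNeq]
  have hcong : (n : GaussianInt) ∣ dd * star v := by
    rw [hnd]
    exact mul_dvd_mul_left dd hstar2
  have hmul : dd * star v = ⟨a₀ * ν - b₀, a₀ + b₀ * ν⟩ := by
    ext <;> simp [hv, Zsqrtd.re_mul, Zsqrtd.im_mul, ha₀, hb₀] <;> ring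
  rw [hmul, Zsqrtd.intCast_dvd] at hcong
  obtain ⟨hc1, hc2⟩ := hcong
  -- coprimality of a₀ b₀
  have hcop : IsCoprime a₀ b₀ := by
    rw [Int.isCoprime_iff_gcd_eq_one]
    by_contra hne
    have hgd : ((Int.gcd a₀ b₀ : ℤ) : GaussianInt) ∣ dd := by
      rw [Zsqrtd.intCast_dvd]
      exact ⟨Int.gcd_dvd_left _ _, Int.gcd_dvd_right _ _⟩
    have hgv : ((Int.gcd a₀ b₀ : ℤ) : GaussianInt) ∣ v := hgd.trans h2
    rw [Zsqrtd.intCast_dvd] at hgv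
    have h2' : (Int.gcd a₀ b₀ : ℤ) ∣ (-1 : ℤ) := by simpa [hv] using hgv.2
    have hu : IsUnit ((Int.gcd a₀ b₀ : ℤ)) := isUnit_of_dvd_unit h2' (IsUnit.neg isUnit_one)
    rcases Int.isUnit_iff.mp hu with h | h <;> omega
  -- quadrant case analysis
  obtain ⟨k1, hk1⟩ := hc1
  obtain ⟨k2, hk2⟩ := hc2
  have hk1' : a₀ * ν - b₀ = n * k1 := hk1
  have hk2' : a₀ + b₀ * ν = n * k2 := hk2
  have hnz : ¬(a₀ = 0 ∧ b₀ = 0) := by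
    rintro ⟨h1', h2'⟩
    rw [h1', h2'] at hsum
    omega
  rcases le_or_gt 1 a₀ with hA | hA
  · rcases le_or_gt 0 b₀ with hB | hB
    · exact ⟨a₀, b₀, hA, hB, hcop, by linear_combination hsum,
        ⟨-k1, by linear_combination -hk1'⟩⟩
    · exact ⟨-b₀, a₀, by omega, by omega, hcop.symm.neg_left,
        by linear_combination hsum, ⟨k2, by linear_combination hk2'⟩⟩
  · rcases le_or_gt 1 b₀ with hB | hB
    · exact ⟨b₀, -a₀, hB, by omega, hcop.symm.neg_right,
        by linear_combination hsum, ⟨-k2, by linear_combination -hk2'⟩⟩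
    · rcases eq_or_lt_of_le (by omega : a₀ ≤ 0) with h0 | h0
      · have hb0 : b₀ ≠ 0 := fun h => hnz ⟨h0, h⟩
        exact ⟨-b₀, a₀, by omega, by omega, hcop.symm.neg_left,
          by linear_combination hsum, ⟨k2, by linear_combination hk2'⟩⟩
      · exact ⟨-a₀, -b₀, by omega, by omega, hcop.neg_left.neg_right,
          by linear_combination hsum, ⟨k1, by linear_combination hk1'⟩⟩

lemma key {a b : ℤ} (ha : 1 ≤ a) (_hb : 0 ≤ b) (h : IsCoprime a b) :
    1 ≤ a ^ 2 + b ^ 2 ∧ 0 ≤ (b * Int.gcdA a (a ^ 2 + b ^ 2)) % (a ^ 2 + b ^ 2) ∧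
      (b * Int.gcdA a (a ^ 2 + b ^ 2)) % (a ^ 2 + b ^ 2) < a ^ 2 + b ^ 2 ∧
      (a ^ 2 + b ^ 2) ∣ (b - ((b * Int.gcdA a (a ^ 2 + b ^ 2)) % (a ^ 2 + b ^ 2)) * a) ∧
      (a ^ 2 + b ^ 2) ∣ ((b * Int.gcdA a (a ^ 2 + b ^ 2)) % (a ^ 2 + b ^ 2)) ^ 2 + 1 := by
  set n := a ^ 2 + b ^ 2 with hn2
  have hn : 1 ≤ n := by nlinarith [sq_nonneg b]
  have hcop : IsCoprime a n := by
    have := (h.pow_right (n := 2)).add_mul_right_right a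
    rw [hn2]
    convert this using 1
    · rfl
    ring
  have hgcd : Int.gcd a n = 1 := Int.isCoprime_iff_gcd_eq_one.mp hcop
  have hbez : (1 : ℤ) = a * Int.gcdA a n + n * Int.gcdB a n := by
    rw [← Int.gcd_eq_gcd_ab, hgcd]; norm_num
  set x := Int.gcdA a n
  set y := Int.gcdB a n
  set ν := (b * x) % n with hν
  have h0 : 0 ≤ ν := Int.emod_nonneg _ (by omega)
  have h1 : ν < n := Int.emod_lt_of_pos _ (by omega)
  have hdvd1 : n ∣ (b - ν * a) := by
    refine ⟨b * y + (b * x / n) * a, ?_⟩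
    rw [hν, Int.emod_def]
    linear_combination b * hbez
  obtain ⟨k, hk⟩ := hdvd1
  have hdvd2 : n ∣ ν ^ 2 + 1 := by
    have hsq : n ∣ a ^ 2 * (ν ^ 2 + 1) :=
      ⟨1 - 2 * b * k + n * k ^ 2, by linear_combination (n * k - ν * a - b) * hk - hn2⟩
    have hc2 : IsCoprime (a ^ 2) n := hcop.pow_left
    exact hc2.symm.dvd_of_dvd_mul_left hsq
  exact ⟨hn, h0, h1, ⟨k, hk⟩, hdvd2⟩

lemma nu_unique {a ν ν' n : ℤ} (hcop : IsCoprime a n)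
    (h0 : 0 ≤ ν) (h1 : ν < n) (h0' : 0 ≤ ν') (h1' : ν' < n)
    (hd : n ∣ (b : ℤ) - ν * a) (hd' : n ∣ b - ν' * a) : ν = ν' := by
  have hdiff : n ∣ (ν - ν') * a := by
    have := hd'.sub hd
    have h2 : b - ν' * a - (b - ν * a) = (ν - ν') * a := by ring
    rwa [h2] at this
  have : n ∣ ν - ν' := hcop.symm.dvd_of_dvd_mul_right hdiff
  have := Int.eq_zero_of_abs_lt_dvd this (by rw [abs_lt]; omega)
  omega

lemma quad_cases {s t a b a' b' : ℤ} (ha : 1 ≤ a) (hb : 0 ≤ b) (ha' : 1 ≤ a') (hb' : 0 ≤ b')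
    (hst : s * s + t * t = 1) (h1 : a = s * a' - t * b') (h2 : b = s * b' + t * a') :
    a = a' ∧ b = b' := by
  have hbs : -1 ≤ s ∧ s ≤ 1 ∧ -1 ≤ t ∧ t ≤ 1 := by
    refine ⟨?_, ?_, ?_, ?_⟩ <;> nlinarith [mul_self_nonneg s, mul_self_nonneg t,
      mul_self_nonneg (s - 1), mul_self_nonneg (s + 1), mul_self_nonneg (t - 1),
      mul_self_nonneg (t + 1)]
  obtain ⟨hs1, hs2, ht1, ht2⟩ := hbs
  interval_cases s <;> interval_cases t <;> omega

lemma inj_aux {a b a' b' ν n : ℤ} (ha : 1 ≤ a) (hb : 0 ≤ b) (ha' : 1 ≤ a') (hb' : 0 ≤ b')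
    (hn : a ^ 2 + b ^ 2 = n) (hn' : a' ^ 2 + b' ^ 2 = n)
    (h1 : n ∣ b - ν * a) (h2 : n ∣ b' - ν * a') (hd : n ∣ ν ^ 2 + 1) :
    a = a' ∧ b = b' := by
  have hnpos : 1 ≤ n := by nlinarith [sq_nonneg b]
  obtain ⟨k, hk⟩ := h1
  obtain ⟨k', hk'⟩ := h2
  obtain ⟨m, hm⟩ := hd
  set z : GaussianInt := ⟨a, b⟩ with hz
  set w : GaussianInt := ⟨a', b'⟩ with hw
  have hzw : z * star w = ⟨a * a' + b * b', b * a' - a * b'⟩ := by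
    ext <;> simp [hz, hw, Zsqrtd.re_mul, Zsqrtd.im_mul] <;> ring
  have hdvd : (n : GaussianInt) ∣ z * star w := by
    rw [hzw, Zsqrtd.intCast_dvd]
    constructor
    · exact ⟨a * a' * m + ν * a * k' + ν * a' * k + n * k * k', by
        linear_combination b' * hk + (ν * a + n * k) * hk' + a * a' * hm⟩
    · exact ⟨a' * k - a * k', by linear_combination a' * hk - a * hk'⟩
  obtain ⟨u, hu⟩ := hdvd
  have hnz : Zsqrtd.norm z = n := by rw [Zsqrtd.norm_def, hz]; simp; linear_combination hn
  have hnw : Zsqrtd.norm w = n := by rw [Zsqrtd.norm_def, hw]; simp; linear_combination hn'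
  have hnu : Zsqrtd.norm u = 1 := by
    have := congrArg Zsqrtd.norm hu
    rw [Zsqrtd.norm_mul, Zsqrtd.norm_mul, Zsqrtd.norm_conj, Zsqrtd.norm_intCast,
      hnz, hnw] at this
    have hne : n * n ≠ 0 := by positivity
    exact (mul_left_cancel₀ hne (by linarith [this])).symm
  have hweq : z = u * w := by
    have hns : (n : GaussianInt) = w * star w := by
      rw [← Zsqrtd.norm_eq_mul_conj, hnw]
    have hsw : star w ≠ 0 := by
      intro h
      have : w = 0 := by simpa using congrArg star h
      rw [this, Zsqrtd.norm_zero] at hnw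
      omega
    have : (z - u * w) * star w = 0 := by
      rw [sub_mul, hu, hns]; ring
    rcases mul_eq_zero.mp this with h | h
    · exact sub_eq_zero.mp h
    · exact absurd h hsw
  -- classify the unit u
  have hst : u.re * u.re + u.im * u.im = 1 := by
    have := Zsqrtd.norm_def u
    rw [hnu] at this
    linarith [this]
  have huw : u * w = ⟨u.re * a' - u.im * b', u.re * b' + u.im * a'⟩ := by
    ext <;> simp [hw, Zsqrtd.re_mul, Zsqrtd.im_mul] <;> ring
  rw [huw] at hweq
  have hare : a = u.re * a' - u.im * b' := congrArg Zsqrtd.re hweq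
  have haim : b = u.re * b' + u.im * a' := congrArg Zsqrtd.im hweq
  exact quad_cases ha hb ha' hb' hst hare haim

end Stmt1Aux

/-- The map sending a coprime pair `(a,b)` with `a ≥ 1`, `b ≥ 0` to `(ν, n)` with
`n = a² + b²` and `ν` the unique integer with `0 ≤ ν < n` and `ν·a ≡ b (mod n)` is a
bijection onto the set of pairs `(ν, n)` with `n ≥ 1`, `0 ≤ ν < n` and `n ∣ ν² + 1`. -/
theorem stmt1 :
    ∃ f : ℤ × ℤ → ℤ × ℤ,
      (∀ p : ℤ × ℤ, 1 ≤ p.1 → 0 ≤ p.2 → IsCoprime p.1 p.2 →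
        (f p).2 = p.1 ^ 2 + p.2 ^ 2 ∧ 0 ≤ (f p).1 ∧ (f p).1 < (f p).2 ∧
          (f p).2 ∣ (p.2 - (f p).1 * p.1)) ∧
      Set.BijOn f {p : ℤ × ℤ | 1 ≤ p.1 ∧ 0 ≤ p.2 ∧ IsCoprime p.1 p.2}
        {q : ℤ × ℤ | 1 ≤ q.2 ∧ 0 ≤ q.1 ∧ q.1 < q.2 ∧ q.2 ∣ q.1 ^ 2 + 1} := by
  classical
  refine ⟨fun p => ((p.2 * Int.gcdA p.1 (p.1 ^ 2 + p.2 ^ 2)) % (p.1 ^ 2 + p.2 ^ 2),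
    p.1 ^ 2 + p.2 ^ 2), ?_, ?_, ?_, ?_⟩
  · intro p hp1 hp2 hcop
    obtain ⟨hn, h0, h1, hdvd, _⟩ := Stmt1Aux.key hp1 hp2 hcop
    exact ⟨rfl, h0, h1, hdvd⟩
  · -- MapsTo
    rintro ⟨a, b⟩ ⟨ha, hb, hcop⟩
    obtain ⟨hn, h0, h1, _, hdvd2⟩ := Stmt1Aux.key ha hb hcop
    exact ⟨hn, h0, h1, hdvd2⟩
  · -- InjOn
    rintro ⟨a, b⟩ ⟨ha, hb, hcop⟩ ⟨a', b'⟩ ⟨ha', hb', hcop'⟩ heq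
    simp only [Prod.mk.injEq] at heq
    obtain ⟨hfst, hsnd⟩ := heq
    obtain ⟨hn, h0, h1, hdvd, hdvd2⟩ := Stmt1Aux.key (a := a) (b := b) ha hb hcop
    obtain ⟨hn', h0', h1', hdvd', hdvd2'⟩ := Stmt1Aux.key (a := a') (b := b') ha' hb' hcop'
    rw [hfst] at hdvd
    rw [hsnd] at hdvd
    have := Stmt1Aux.inj_aux ha hb ha' hb' hsnd rfl hdvd hdvd' hdvd2'
    exact Prod.ext this.1 this.2
  · -- SurjOn
    rintro ⟨ν, n⟩ ⟨hn, h0, h1, hdvd⟩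
    obtain ⟨a, b, ha, hb, hcop, hab, hcong⟩ := Stmt1Aux.exists_ab ν n hn hdvd
    refine ⟨(a, b), ⟨ha, hb, hcop⟩, ?_⟩
    obtain ⟨hn1, h0', h1', hdvd', _⟩ := Stmt1Aux.key (a := a) (b := b) ha hb hcop
    have hcopan : IsCoprime a n := by
      have := (hcop.pow_right (n := 2)).add_mul_right_right a
      rw [← hab]
      convert this using 1
      · rfl
      ring
    have hνeq : (b * Int.gcdA a (a ^ 2 + b ^ 2)) % (a ^ 2 + b ^ 2) = ν := by
      refine Stmt1Aux.nu_unique (b := b) hcopan ?_ ?_ h0 h1 ?_ ?_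
      · exact h0'
      · rw [← hab]; exact h1'
      · rw [← hab] at *; exact hdvd'
      · exact hcong
    simp only [Prod.mk.injEq]
    exact ⟨hνeq, hab⟩
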